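/- Under the standing assumptions and the STOS double-step relations, with Λ(γ) := (1 − γ(1 + l + 2β))/(2γ) − (3γ + 2)(γL² + 2l + 2L)/2, the merit function decreases up to estimator-error terms: M(x⁺, y⁺, z⁺) + Λ(γ)‖y⁺ − y‖² ≤ M(x, y, z) + ⟨g − ∇H(y), z − y⟩ − ⟨g⁺ − ∇H(y⁺), z⁺ − y⁺⟩ + ½‖g⁺ − ∇H(y⁺)‖² + ‖g − ∇H(y)‖². -/

import Mathlib

open scoped RealInnerProductSpace

section AuxLemmas

open InnerProductSpace

variable {E : Type*} [NormedAddCommGroup E] [InnerProductSpace ℝ E] [CompleteSpace E]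

lemma hasDerivAt_line_aux {φ : E → ℝ} {φ' : E → E} (hdiff : ∀ u, HasGradientAt φ (φ' u) u)
    (u d : E) (t : ℝ) :
    HasDerivAt (fun s : ℝ => φ (u + s • d)) ⟪φ' (u + t • d), d⟫ t := by
  have hpath : HasDerivAt (fun s : ℝ => u + s • d) d t := by
    simpa using ((hasDerivAt_id t).smul_const d).const_add u
  have := ((hdiff (u + t • d)).hasFDerivAt).comp_hasDerivAt t hpath
  simpa [toDual_apply_apply, Function.comp_def] using this

lemma convex_grad_ineq_aux {φ : E → ℝ} {φ' : E → E}
    (hconv : ConvexOn ℝ Set.univ φ) (hdiff : ∀ u, HasGradientAt φ (φ' u) u) (u v : E) :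
    φ u + ⟪φ' u, v - u⟫ ≤ φ v := by
  have hline := hasDerivAt_line_aux hdiff u (v - u) 0
  have hf : ConvexOn ℝ Set.univ (fun t : ℝ => φ (u + t • (v - u))) := by
    have := hconv.comp_affineMap (AffineMap.lineMap u v : ℝ →ᵃ[ℝ] E)
    simp only [Set.preimage_univ] at this
    have e : (fun t : ℝ => φ (u + t • (v - u))) = φ ∘ AffineMap.lineMap u v := by
      funext t
      simp [AffineMap.lineMap_apply, add_comm]
    rw [e]
    exact this
  have hslope := ConvexOn.le_slope_of_hasDerivAt
    hf (Set.mem_univ (0:ℝ)) (Set.mem_univ (1:ℝ)) zero_lt_one (by simpa using hline)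
  simp [slope_def_field] at hslope
  linarith [hslope]

lemma descent_lemma_aux {φ : E → ℝ} {φ' : E → E} {β : ℝ}
    (hdiff : ∀ u, HasGradientAt φ (φ' u) u)
    (hlip : ∀ u v, ‖φ' u - φ' v‖ ≤ β * ‖u - v‖) (u v : E) :
    φ v ≤ φ u + ⟪φ' u, v - u⟫ + β / 2 * ‖v - u‖ ^ 2 := by
  set d := v - u with hd
  have hg : ∀ t : ℝ, HasDerivAt
      (fun t : ℝ => φ (u + t • d) - t * ⟪φ' u, d⟫ - β / 2 * t ^ 2 * ‖d‖ ^ 2)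
      (⟪φ' (u + t • d), d⟫ - ⟪φ' u, d⟫ - β * t * ‖d‖ ^ 2) t := by
    intro t
    have h1 := hasDerivAt_line_aux hdiff u d t
    have h2 : HasDerivAt (fun t : ℝ => t * ⟪φ' u, d⟫) ⟪φ' u, d⟫ t := by
      simpa using (hasDerivAt_id t).mul_const ⟪φ' u, d⟫
    have h3 : HasDerivAt (fun t : ℝ => β / 2 * t ^ 2 * ‖d‖ ^ 2)
        (β * t * ‖d‖ ^ 2) t := by
      have := ((hasDerivAt_pow 2 t).const_mul (β / 2)).mul_const (‖d‖ ^ 2)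
      refine this.congr_deriv ?_
      rw [show (2:ℕ) - 1 = 1 from rfl]
      push_cast
      ring
    exact (h1.sub h2).sub h3
  have hanti : AntitoneOn
      (fun t : ℝ => φ (u + t • d) - t * ⟪φ' u, d⟫ - β / 2 * t ^ 2 * ‖d‖ ^ 2)
      (Set.Icc 0 1) := by
    apply antitoneOn_of_deriv_nonpos (convex_Icc 0 1)
    · exact Continuous.continuousOn (by
        exact continuous_iff_continuousAt.2 fun t => (hg t).continuousAt)
    · intro t ht
      exact ((hg t).differentiableAt).differentiableWithinAt
    · intro t ht
      rw [interior_Icc] at ht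
      rw [(hg t).deriv]
      have hcs : ⟪φ' (u + t • d) - φ' u, d⟫ ≤ β * t * ‖d‖ ^ 2 := by
        calc ⟪φ' (u + t • d) - φ' u, d⟫ ≤ ‖φ' (u + t • d) - φ' u‖ * ‖d‖ :=
              real_inner_le_norm _ _
          _ ≤ (β * ‖(u + t • d) - u‖) * ‖d‖ := by
              exact mul_le_mul_of_nonneg_right (hlip _ _) (norm_nonneg _)
          _ = β * |t| * ‖d‖ * ‖d‖ := by
              rw [add_sub_cancel_left, norm_smul, Real.norm_eq_abs]; ring
          _ = β * t * ‖d‖ ^ 2 := by rw [abs_of_pos ht.1]; ring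
      rw [inner_sub_left] at hcs
      linarith
  have h01 := hanti (Set.left_mem_Icc.2 zero_le_one) (Set.right_mem_Icc.2 zero_le_one)
    zero_le_one
  simp only [zero_smul, add_zero, one_smul, zero_mul, sub_zero, zero_pow, mul_zero,
    one_pow, mul_one] at h01
  have : u + d = v := by rw [hd]; abel
  rw [this] at h01
  linarith

lemma hasGradientAt_normsq_div_aux (γ : ℝ) (hγ : γ ≠ 0) (w u : E) :
    HasGradientAt (fun v => ‖v - w‖ ^ 2 / (2 * γ)) (γ⁻¹ • (u - w)) u := by
  have hfd : HasFDerivAt (fun v : E => ‖v - w‖ ^ 2)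
      (2 • (innerSL ℝ (u - w)).comp (ContinuousLinearMap.id ℝ E)) u := by
    simpa using ((hasFDerivAt_id u).sub_const w).norm_sq
  have heq : (fun v : E => ‖v - w‖ ^ 2 / (2 * γ))
      = fun v : E => (2 * γ)⁻¹ • ‖v - w‖ ^ 2 := by
    funext v; rw [div_eq_inv_mul]; rfl
  have h2 : HasFDerivAt (fun v : E => (2 * γ)⁻¹ • ‖v - w‖ ^ 2)
      ((2 * γ)⁻¹ • (2 • (innerSL ℝ (u - w)).comp (ContinuousLinearMap.id ℝ E))) u :=
    hfd.const_smul ((2 * γ)⁻¹)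
  rw [← heq] at h2
  have hop : (toDual ℝ E) (γ⁻¹ • (u - w))
      = (2 * γ)⁻¹ • (2 • ((innerSL ℝ) (u - w)).comp (ContinuousLinearMap.id ℝ E)) := by
    ext v
    simp [toDual_apply_apply, real_inner_smul_left, two_smul]
    field_simp
    ring
  rw [HasGradientAt, HasGradientAtFilter, hop]
  exact h2

lemma hasGradientAt_const_mul_normsq_aux (l : ℝ) (u : E) :
    HasGradientAt (fun v : E => l / 2 * ‖v‖ ^ 2) (l • u) u := by
  have hfd : HasFDerivAt (fun v : E => ‖v‖ ^ 2)
      (2 • (innerSL ℝ u).comp (ContinuousLinearMap.id ℝ E)) u := by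
    simpa using (hasFDerivAt_id u).norm_sq
  have h2 := hfd.const_smul (l / 2)
  have heq : (fun v : E => l / 2 * ‖v‖ ^ 2) = fun v : E => (l / 2) • ‖v‖ ^ 2 := rfl
  have hop : (toDual ℝ E) (l • u)
      = (l / 2) • (2 • ((innerSL ℝ) u).comp (ContinuousLinearMap.id ℝ E)) := by
    ext v
    simp [toDual_apply_apply, real_inner_smul_left, two_smul]
    ring
  rw [HasGradientAt, HasGradientAtFilter, heq, hop]
  exact h2

lemma prox_grad_eq_aux {φ : E → ℝ} {φ'y : E} {γ : ℝ} (hγ : 0 < γ) {y w : E}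
    (hdiff : HasGradientAt φ φ'y y)
    (hmin : ∀ u, φ y + ‖y - w‖ ^ 2 / (2 * γ) ≤ φ u + ‖u - w‖ ^ 2 / (2 * γ)) :
    w = y + γ • φ'y := by
  have hq := hasGradientAt_normsq_div_aux γ (ne_of_gt hγ) w y
  have hsum : HasGradientAt (fun u => φ u + ‖u - w‖ ^ 2 / (2 * γ))
      (φ'y + γ⁻¹ • (y - w)) y := by
    rw [HasGradientAt, HasGradientAtFilter, map_add]
    exact hdiff.hasFDerivAt.add hq.hasFDerivAt
  have hloc : IsLocalMin (fun u => φ u + ‖u - w‖ ^ 2 / (2 * γ)) y :=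
    Filter.Eventually.of_forall hmin
  have h0 := hloc.hasFDerivAt_eq_zero hsum.hasFDerivAt
  have hvec : φ'y + γ⁻¹ • (y - w) = 0 := by
    apply (toDual ℝ E).injective
    rw [h0, map_zero]
  have h2 : γ • φ'y + (y - w) = 0 := by
    have := congrArg (fun v => γ • v) hvec
    simpa [smul_add, smul_smul, mul_inv_cancel₀ (ne_of_gt hγ)] using this
  have h4 : w - (y + γ • φ'y) = -(γ • φ'y + (y - w)) := by abel
  rw [← sub_eq_zero, h4, h2, neg_zero]

omit [CompleteSpace E] in
lemma young_ineq_aux (u v : E) : 2 * ⟪u, v⟫ ≤ ‖u‖ ^ 2 + ‖v‖ ^ 2 := by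
  have h := norm_sub_sq_real u v
  nlinarith [sq_nonneg ‖u - v‖]

end AuxLemmas

/-- The merit function `M(x,y,z)` of the paper. -/
noncomputable def merit {n : ℕ}
    (F G H : EuclideanSpace ℝ (Fin n) → ℝ)
    (H' : EuclideanSpace ℝ (Fin n) → EuclideanSpace ℝ (Fin n))
    (γ : ℝ) (x y z : EuclideanSpace ℝ (Fin n)) : ℝ :=
  F y + G z + H y + ‖y - x‖ ^ 2 / (2*γ) - ‖z - x‖ ^ 2 / (2*γ) + ⟪H' y, z - y⟫

/-- The constant `Λ(γ)` of Theorem 3.1. -/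
noncomputable def lambda0 (γ L l β : ℝ) : ℝ :=
  (1 - γ * (1 + l + 2*β)) / (2*γ) - (3*γ + 2) * (γ * L ^ 2 + 2*l + 2*L) / 2

set_option maxHeartbeats 2000000 in
/-- The pathwise one-step recursion from the proof of Theorem 3.1 of the paper. -/
theorem stmt_6 {n : ℕ}
    (F G H : EuclideanSpace ℝ (Fin n) → ℝ)
    (F' H' : EuclideanSpace ℝ (Fin n) → EuclideanSpace ℝ (Fin n))
    (γ L l β : ℝ) (hγ : 0 < γ) (hL : 0 < L) (hβ : 0 < β) (hβ1 : β ≤ 1)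
    (hFdiff : ∀ u, HasGradientAt F (F' u) u)
    (hFlip : ∀ u v, ‖F' u - F' v‖ ≤ L * ‖u - v‖)
    (hFconv : ConvexOn ℝ Set.univ (fun u => F u + (l/2) * ‖u‖ ^ 2))
    (hG : LowerSemicontinuous G)
    (hHdiff : ∀ u, HasGradientAt H (H' u) u)
    (hHlip : ∀ u v, ‖H' u - H' v‖ ≤ β * ‖u - v‖)
    (w x xp y yp z zp g gp : EuclideanSpace ℝ (Fin n))
    (hy : ∀ u, F y + ‖y - w‖ ^ 2 / (2*γ) ≤ F u + ‖u - w‖ ^ 2 / (2*γ))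
    (hz : ∀ u, G z + ‖z - ((2:ℝ) • y - γ • g - w)‖ ^ 2 / (2*γ)
        ≤ G u + ‖u - ((2:ℝ) • y - γ • g - w)‖ ^ 2 / (2*γ))
    (hx : x = w + z - y)
    (hyp : ∀ u, F yp + ‖yp - x‖ ^ 2 / (2*γ) ≤ F u + ‖u - x‖ ^ 2 / (2*γ))
    (hzp : ∀ u, G zp + ‖zp - ((2:ℝ) • yp - γ • gp - x)‖ ^ 2 / (2*γ)
        ≤ G u + ‖u - ((2:ℝ) • yp - γ • gp - x)‖ ^ 2 / (2*γ))
    (hxp : xp = x + zp - yp) :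
    merit F G H H' γ xp yp zp + lambda0 γ L l β * ‖yp - y‖ ^ 2
      ≤ merit F G H H' γ x y z
        + ⟪g - H' y, z - y⟫ - ⟪gp - H' yp, zp - yp⟫
        + (1/2) * ‖gp - H' yp‖ ^ 2 + ‖g - H' y‖ ^ 2 := by
  -- gradient of the weakly convex shifted function
  have hφdiff : ∀ u, HasGradientAt (fun u => F u + (l/2) * ‖u‖ ^ 2) (F' u + l • u) u := by
    intro u
    rw [HasGradientAt, HasGradientAtFilter, map_add]
    exact (hFdiff u).hasFDerivAt.add (hasGradientAt_const_mul_normsq_aux l u).hasFDerivAt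
  -- l ≥ -L
  rcases subsingleton_or_nontrivial (EuclideanSpace ℝ (Fin n)) with hsub | hnt
  · have e0 : ∀ v : EuclideanSpace ℝ (Fin n), v = 0 := fun v => Subsingleton.elim v 0
    rw [e0 xp, e0 x, e0 y, e0 yp, e0 z, e0 zp, e0 g, e0 gp]
    simp [e0 (H' 0)]
  obtain ⟨v0, hv0⟩ := exists_ne (0 : EuclideanSpace ℝ (Fin n))
  have hl : -L ≤ l := by
    set e1 : EuclideanSpace ℝ (Fin n) := ‖v0‖⁻¹ • v0 with he1def
    have he1 : ‖e1‖ = 1 := norm_smul_inv_norm hv0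
    have h1 := convex_grad_ineq_aux hFconv hφdiff 0 e1
    have h2 := convex_grad_ineq_aux hFconv hφdiff e1 0
    have hself : ⟪e1, e1⟫ = 1 := by
      rw [real_inner_self_eq_norm_sq, he1]; norm_num
    have hA : ⟪F' e1, e1⟫ - ⟪F' 0, e1⟫ ≤ L := by
      have hcs := real_inner_le_norm (F' e1 - F' 0) e1
      have hlips := hFlip e1 0
      rw [inner_sub_left] at hcs
      rw [sub_zero, he1] at hlips
      rw [he1] at hcs
      nlinarith [hcs, hlips]
    simp only [inner_add_left, inner_sub_right, real_inner_smul_left, inner_zero_right,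
      inner_zero_left, sub_zero, zero_sub, inner_neg_right, norm_zero, smul_zero,
      hself] at h1 h2
    nlinarith [h1, h2, hA]
  -- prox stationarity
  have key1 : w = y + γ • F' y := prox_grad_eq_aux hγ (hFdiff y) hy
  have key2 : x = yp + γ • F' yp := prox_grad_eq_aux hγ (hFdiff yp) hyp
  have hzv : z = yp + γ • F' yp - γ • F' y := by
    have hz1 : z = x - w + y := by rw [hx]; abel
    rw [hz1, key1, key2]; abel
  subst hzv
  subst key2
  subst hxp
  subst key1
  -- scaled hypotheses
  have h2γ : (0:ℝ) < 2 * γ := by linarith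
  have hsc : ∀ X N : ℝ, (2*γ) * (X + N / (2*γ)) = 2*γ*X + N := by
    intro X N; rw [mul_add, mul_div_cancel₀ _ (ne_of_gt h2γ)]
  have hGz2 := mul_le_mul_of_nonneg_left (hzp (yp + γ • F' yp - γ • F' y)) h2γ.le
  rw [hsc, hsc] at hGz2
  have hFineq := convex_grad_ineq_aux hFconv hφdiff yp y
  have hF2 := mul_le_mul_of_nonneg_left hFineq h2γ.le
  have hHineq := descent_lemma_aux hHdiff hHlip y yp
  have hH2 := mul_le_mul_of_nonneg_left hHineq h2γ.le
  -- merit expansion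
  have mE : ∀ X Y Z : EuclideanSpace ℝ (Fin n),
      2*γ * merit F G H H' γ X Y Z
        = 2*γ*(F Y + G Z + H Y + ⟪H' Y, Z - Y⟫) + ‖Y - X‖ ^ 2 - ‖Z - X‖ ^ 2 := by
    intro X Y Z
    simp only [merit]
    field_simp
    ring
  have mE1 := mE (yp + γ • F' yp + zp - yp) yp zp
  have mE2 := mE (yp + γ • F' yp) y (yp + γ • F' yp - γ • F' y)
  -- lambda0 bound
  have lamEq : 2*γ*lambda0 γ L l β
      = 1 - γ*(1+l+2*β) - γ*(3*γ+2)*(γ*L^2+2*l+2*L) := by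
    simp only [lambda0]
    field_simp
  have hPoly0 : 2*γ*lambda0 γ L l β
      ≤ 1 - γ*(l+β) - γ - 2*γ^2*L^2 - 2*γ^2*β*L - 2*γ^3*L^2 := by
    rw [lamEq]
    nlinarith [mul_nonneg (mul_nonneg hγ.le (by linarith : (0:ℝ) ≤ 6*γ+4))
        (by linarith : (0:ℝ) ≤ l + L),
      mul_nonneg (mul_nonneg hγ.le hβ.le) (sq_nonneg (γ*L - 1)),
      mul_nonneg (mul_nonneg hγ.le (by linarith : (0:ℝ) ≤ 1 - β)) (sq_nonneg (γ*L))]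
  have hPolyD := mul_le_mul_of_nonneg_right hPoly0 (sq_nonneg ‖yp - y‖)
  -- Young inequalities
  have y1 := mul_le_mul_of_nonneg_left (young_ineq_aux (H' y - g) (yp - y)) hγ.le
  have y2 := mul_le_mul_of_nonneg_left
    (young_ineq_aux (gp - H' yp) (γ • (F' yp - F' y))) hγ.le
  have y3 := mul_le_mul_of_nonneg_left
    (young_ineq_aux (H' y - g) (γ • (F' yp - F' y))) hγ.le
  have y4a : ⟪H' yp - H' y, F' yp - F' y⟫ ≤ (β * ‖yp - y‖) * (L * ‖yp - y‖) :=
    le_trans (real_inner_le_norm _ _)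
      (mul_le_mul (hHlip yp y) (hFlip yp y) (norm_nonneg _) (by positivity))
  have y4b : ⟪H' yp - H' y, F' yp - F' y⟫ ≤ β * L * ‖yp - y‖ ^ 2 := by
    nlinarith [y4a]
  have y4 := mul_le_mul_of_nonneg_left y4b (by positivity : (0:ℝ) ≤ 2*γ^2)
  have y5a : ‖F' yp - F' y‖ ^ 2 ≤ L^2 * ‖yp - y‖ ^ 2 := by
    nlinarith [hFlip yp y, norm_nonneg (F' yp - F' y), norm_nonneg (yp - y)]
  have y5 := mul_le_mul_of_nonneg_left y5a (by positivity : (0:ℝ) ≤ 2*γ^2 + 2*γ^3)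
  -- reduce the goal to the scaled version
  refine le_of_mul_le_mul_left ?_ h2γ
  simp only [inner_sub_left, inner_sub_right, inner_add_left, inner_add_right,
    real_inner_smul_left, real_inner_smul_right, ← real_inner_self_eq_norm_sq,
    real_inner_comm] at hGz2 hF2 hH2 hPolyD y1 y2 y3 y4 y5 mE1 mE2 ⊢
  linarith only [hGz2, hF2, hH2, hPolyD, y1, y2, y3, y4, y5, mE1, mE2]
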